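/- The normed space C_τ is not separable. -/

import Mathlib

open Real Topology Filter MeasureTheory

noncomputable section

/-- Continuous-time paths indexed by `(-∞,0]`, with values in `ℝ^d`. -/
abbrev Path0 (d : ℕ) := Set.Iic (0:ℝ) → EuclideanSpace ℝ (Fin d)

/-- The weighted norm `‖ξ‖_τ = sup_{s ≤ 0} e^{τ s} |ξ(s)|`. -/
noncomputable def wnorm (d : ℕ) (τ : ℝ) (ξ : Path0 d) : ℝ :=
  ⨆ s : Set.Iic (0:ℝ), Real.exp (τ * s.1) * ‖ξ s‖

/-- Membership in `C_τ`: continuity plus finiteness (boundedness) of the weighted sup. -/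
def memC (d : ℕ) (τ : ℝ) (ξ : Path0 d) : Prop :=
  Continuous ξ ∧ BddAbove (Set.range fun s : Set.Iic (0:ℝ) => Real.exp (τ * s.1) * ‖ξ s‖)

namespace CtauAux

/-- Point set attached to `A : Set ℕ`. -/
def pts (A : Set ℕ) : Set ℝ := insert 2 {x | ∃ n ∈ A, x = -((n:ℝ)+1)}

lemma pts_nonempty (A : Set ℕ) : (pts A).Nonempty := ⟨2, Or.inl rfl⟩

/-- Bump profile. -/
def g (A : Set ℕ) (x : ℝ) : ℝ := max 0 (1 - 2 * Metric.infDist x (pts A))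

lemma g_nonneg (A : Set ℕ) (x : ℝ) : 0 ≤ g A x := le_max_left _ _

lemma g_le_one (A : Set ℕ) (x : ℝ) : g A x ≤ 1 := by
  apply max_le (by norm_num)
  have := Metric.infDist_nonneg (x := x) (s := pts A)
  linarith

lemma g_continuous (A : Set ℕ) : Continuous (g A) := by
  apply continuous_const.max
  have := Metric.continuous_infDist_pt (pts A)
  continuity

lemma g_of_mem {A : Set ℕ} {n : ℕ} (hn : n ∈ A) : g A (-((n:ℝ)+1)) = 1 := by
  have hx : (-((n:ℝ)+1)) ∈ pts A := Or.inr ⟨n, hn, rfl⟩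
  show max 0 (1 - 2 * Metric.infDist (-((n:ℝ)+1)) (pts A)) = 1
  rw [Metric.infDist_zero_of_mem hx]; norm_num

lemma g_of_not_mem {A : Set ℕ} {n : ℕ} (hn : n ∉ A) : g A (-((n:ℝ)+1)) = 0 := by
  have hge : (1:ℝ)/2 ≤ Metric.infDist (-((n:ℝ)+1)) (pts A) := by
    by_contra h
    push_neg at h
    obtain ⟨y, hy, hdy⟩ := (Metric.infDist_lt_iff (pts_nonempty A)).mp h
    rcases hy with rfl | ⟨m, hm, rfl⟩
    · rw [Real.dist_eq] at hdy
      have : (0:ℝ) ≤ (n:ℝ) := Nat.cast_nonneg n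
      rw [abs_of_nonpos (by linarith)] at hdy
      linarith
    · have hmn : m ≠ n := fun h => hn (h ▸ hm)
      rw [Real.dist_eq] at hdy
      have h1 : (1:ℝ) ≤ |(m:ℝ) - n| := by
        have : ((m:ℤ) - n) ≠ 0 := sub_ne_zero.mpr (by exact_mod_cast hmn)
        have := Int.one_le_abs this
        calc (1:ℝ) ≤ |((m:ℤ) - n : ℤ)| := by exact_mod_cast this
          _ = |(m:ℝ) - n| := by push_cast; ring_nf
      have : |-((n:ℝ)+1) - (-((m:ℝ)+1))| = |(m:ℝ) - n| := by
        rw [show -((n:ℝ)+1) - (-((m:ℝ)+1)) = (m:ℝ) - n by ring]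
      rw [this] at hdy; linarith
  have : 1 - 2 * Metric.infDist (-((n:ℝ)+1)) (pts A) ≤ 0 := by linarith
  show max 0 (1 - 2 * Metric.infDist (-((n:ℝ)+1)) (pts A)) = 0
  rw [max_eq_left this]

variable (d : ℕ) (hd : 0 < d) (τ : ℝ)

/-- Unit vector. -/
def e (d : ℕ) (hd : 0 < d) : EuclideanSpace ℝ (Fin d) :=
  EuclideanSpace.single (⟨0, hd⟩ : Fin d) (1:ℝ)

lemma norm_e : ‖e d hd‖ = 1 := by
  simp [e, EuclideanSpace.norm_single]

/-- The path family. -/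
def ξ (A : Set ℕ) : Path0 d :=
  fun s => (Real.exp (-(τ * s.1)) * g A s.1) • e d hd

lemma weight_ξ (A : Set ℕ) (s : Set.Iic (0:ℝ)) :
    Real.exp (τ * s.1) * ‖ξ d hd τ A s‖ = g A s.1 := by
  have h0 : (0:ℝ) ≤ Real.exp (-(τ * s.1)) * g A s.1 :=
    mul_nonneg (Real.exp_nonneg _) (g_nonneg A s.1)
  rw [ξ, norm_smul, norm_e, mul_one, Real.norm_eq_abs, abs_of_nonneg h0,
    ← mul_assoc, ← Real.exp_add]
  simp

lemma memC_ξ (A : Set ℕ) : memC d τ (ξ d hd τ A) := by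
  constructor
  · apply Continuous.fun_smul
    · exact ((Real.continuous_exp.comp (by continuity)).mul
        ((g_continuous A).comp continuous_subtype_val))
    · exact continuous_const
  · refine ⟨1, ?_⟩
    rintro x ⟨s, rfl⟩
    dsimp only
    rw [weight_ξ]
    exact g_le_one A s.1

end CtauAux

/-- the normed space `(C_τ, ‖·‖_τ)` is not separable: there is no countable
subset of `C_τ` that is dense in `C_τ` for the norm `‖·‖_τ`. -/
theorem Ctau_not_separable (d : ℕ) (hd : 0 < d) (τ : ℝ) (hτ : 0 < τ) :
    ¬ ∃ S : Set (Path0 d), S.Countable ∧ (∀ η ∈ S, memC d τ η) ∧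
      ∀ ξ : Path0 d, memC d τ ξ → ∀ ε : ℝ, 0 < ε → ∃ η ∈ S, wnorm d τ (ξ - η) < ε := by
  rintro ⟨S, hScount, hSmem, hdense⟩
  classical
  -- choose approximants
  choose F hFS hFlt using fun A : Set ℕ =>
    hdense (CtauAux.ξ d hd τ A) (CtauAux.memC_ξ d hd τ A) (1/2) (by norm_num)
  -- key: pointwise weighted value is ≤ wnorm for the differences
  have hbound : ∀ (A : Set ℕ) (s : Set.Iic (0:ℝ)),
      Real.exp (τ * s.1) * ‖(CtauAux.ξ d hd τ A - F A) s‖ ≤ wnorm d τ (CtauAux.ξ d hd τ A - F A) := by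
    intro A s
    obtain ⟨M, hM⟩ := (hSmem (F A) (hFS A)).2
    apply le_ciSup (f := fun s : Set.Iic (0:ℝ) =>
      Real.exp (τ * s.1) * ‖(CtauAux.ξ d hd τ A - F A) s‖)
    refine ⟨1 + M, ?_⟩
    rintro x ⟨t, rfl⟩
    dsimp only
    have h1 : ‖(CtauAux.ξ d hd τ A - F A) t‖ ≤ ‖CtauAux.ξ d hd τ A t‖ + ‖F A t‖ := by
      simpa [Pi.sub_apply] using norm_sub_le (CtauAux.ξ d hd τ A t) (F A t)
    have h2 : Real.exp (τ * t.1) * ‖(CtauAux.ξ d hd τ A - F A) t‖ ≤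
        Real.exp (τ * t.1) * ‖CtauAux.ξ d hd τ A t‖ + Real.exp (τ * t.1) * ‖F A t‖ := by
      rw [← mul_add]
      exact mul_le_mul_of_nonneg_left h1 (Real.exp_nonneg _)
    have h3 : Real.exp (τ * t.1) * ‖CtauAux.ξ d hd τ A t‖ ≤ 1 := by
      rw [CtauAux.weight_ξ]; exact CtauAux.g_le_one A t.1
    have h4 : Real.exp (τ * t.1) * ‖F A t‖ ≤ M := hM ⟨t, rfl⟩
    linarith
  -- F is injective
  have hinj : Function.Injective F := by
    intro A B hAB
    by_contra hne
    have : ∃ n : ℕ, (n ∈ A ∧ n ∉ B) ∨ (n ∈ B ∧ n ∉ A) := by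
      by_contra h
      push_neg at h
      apply hne
      ext n
      have := h n
      tauto
    obtain ⟨n, hn⟩ := this
    set s : Set.Iic (0:ℝ) := ⟨-((n:ℝ)+1), by simp only [Set.mem_Iic]; have : (0:ℝ) ≤ n := Nat.cast_nonneg n; linarith⟩ with hs
    have hgdiff : |CtauAux.g A s.1 - CtauAux.g B s.1| = 1 := by
      rcases hn with ⟨h1, h2⟩ | ⟨h1, h2⟩
      · rw [hs]; simp only
        rw [CtauAux.g_of_mem h1, CtauAux.g_of_not_mem h2]; norm_num
      · rw [hs]; simp only
        rw [CtauAux.g_of_not_mem h2, CtauAux.g_of_mem h1]; norm_num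
    -- pointwise triangle inequality
    have key : |CtauAux.g A s.1 - CtauAux.g B s.1| ≤
        Real.exp (τ * s.1) * ‖(CtauAux.ξ d hd τ A - F A) s‖ +
        Real.exp (τ * s.1) * ‖(CtauAux.ξ d hd τ B - F B) s‖ := by
      have hnm : ‖CtauAux.ξ d hd τ A s - CtauAux.ξ d hd τ B s‖ ≤
          ‖CtauAux.ξ d hd τ A s - F A s‖ + ‖CtauAux.ξ d hd τ B s - F B s‖ := by
        rw [hAB]
        calc ‖CtauAux.ξ d hd τ A s - CtauAux.ξ d hd τ B s‖
            ≤ ‖CtauAux.ξ d hd τ A s - F B s‖ + ‖F B s - CtauAux.ξ d hd τ B s‖ :=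
              norm_sub_le_norm_sub_add_norm_sub _ _ _
          _ = ‖CtauAux.ξ d hd τ A s - F B s‖ + ‖CtauAux.ξ d hd τ B s - F B s‖ := by
              rw [norm_sub_rev (F B s)]
      have hexp : Real.exp (τ * s.1) * ‖CtauAux.ξ d hd τ A s - CtauAux.ξ d hd τ B s‖ =
          |CtauAux.g A s.1 - CtauAux.g B s.1| := by
        have : CtauAux.ξ d hd τ A s - CtauAux.ξ d hd τ B s =
            (Real.exp (-(τ * s.1)) * (CtauAux.g A s.1 - CtauAux.g B s.1)) • CtauAux.e d hd := by
          rw [CtauAux.ξ, CtauAux.ξ, ← sub_smul]; ring_nf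
        rw [this, norm_smul, CtauAux.norm_e, mul_one, Real.norm_eq_abs, abs_mul,
          abs_of_nonneg (Real.exp_nonneg _), ← mul_assoc, ← Real.exp_add]
        simp
      calc |CtauAux.g A s.1 - CtauAux.g B s.1|
          = Real.exp (τ * s.1) * ‖CtauAux.ξ d hd τ A s - CtauAux.ξ d hd τ B s‖ := hexp.symm
        _ ≤ Real.exp (τ * s.1) * (‖CtauAux.ξ d hd τ A s - F A s‖ + ‖CtauAux.ξ d hd τ B s - F B s‖) :=
            mul_le_mul_of_nonneg_left hnm (Real.exp_nonneg _)
        _ = Real.exp (τ * s.1) * ‖(CtauAux.ξ d hd τ A - F A) s‖ +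
            Real.exp (τ * s.1) * ‖(CtauAux.ξ d hd τ B - F B) s‖ := by
            simp [Pi.sub_apply, mul_add]
    have h1 := hbound A s
    have h2 := hbound B s
    have hA := hFlt A
    have hB := hFlt B
    rw [hgdiff] at key
    linarith
  -- contradiction with Cantor: Set ℕ injects into countable S
  have hSc : Countable ↥S := hScount.to_subtype
  have hinj2 : Function.Injective (fun A : Set ℕ => (⟨F A, hFS A⟩ : ↥S)) := by
    intro A B h
    exact hinj (congrArg Subtype.val h)
  have : Countable (Set ℕ) := hinj2.countable
  obtain ⟨f, hf⟩ := this.exists_injective_nat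
  exact Function.cantor_injective f hf
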